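/- Fix N ≥ 1, strictly positive targets v : Fin N → ℝ, and a constant c > 0. On a probability space (Ω, 𝔽, ℙ), let X_1, …, X_N : Ω → ℝ be measurable (the persona means), and for each n let V̂_p^{(n)} : Ω → ℝ be measurable, strictly positive, with V̂_p^{(n)} → c·v_p in probability as n → ∞ for each p. Let Ŵ_p^{(n)} = (V̂_p^{(n)})^{-1}/Σ_q (V̂_q^{(n)})^{-1} and w*_p = v_p^{-1}/Σ_q v_q^{-1}. Then the feasible OWB estimator Σ_p Ŵ_p^{(n)} X_p converges in probability (as n → ∞) to the ideal OWB estimator Σ_p w*_p X_p, i.e., Σ_p Ŵ_p^{(n)} X_p − Σ_p w*_p X_p → 0 in probability. -/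

import Mathlib

open MeasureTheory ProbabilityTheory Filter

/-- Componentwise convergence in measure implies convergence in measure of the vector. -/
lemma tendstoInMeasure_pi_of_components {Ω : Type*} [MeasureSpace Ω]
    {N : ℕ} (F : ℕ → Ω → Fin N → ℝ) (G : Ω → Fin N → ℝ)
    (h : ∀ p, TendstoInMeasure (ℙ : Measure Ω) (fun n ω => F n ω p) atTop (fun ω => G ω p)) :
    TendstoInMeasure (ℙ : Measure Ω) F atTop G := by
  intro ε hε
  have hsub : ∀ n, {ω | ε ≤ edist (F n ω) (G ω)} ⊆
      ⋃ p : Fin N, {ω | ε ≤ edist (F n ω p) (G ω p)} := by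
    intro n ω hω
    by_contra hcon
    simp only [Set.mem_iUnion, Set.mem_setOf_eq, not_exists, not_le] at hcon
    have : edist (F n ω) (G ω) < ε := by
      rw [edist_pi_def]; exact (Finset.sup_lt_iff hε).2 fun p _ => hcon p
    exact absurd hω (not_le.2 this)
  have hbound : ∀ n, (ℙ : Measure Ω) {ω | ε ≤ edist (F n ω) (G ω)} ≤
      ∑ p : Fin N, (ℙ : Measure Ω) {ω | ε ≤ edist (F n ω p) (G ω p)} :=
    fun n => (measure_mono (hsub n)).trans (measure_iUnion_fintype_le _ _)
  have hsumto : Filter.Tendsto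
      (fun n => ∑ p : Fin N, (ℙ : Measure Ω) {ω | ε ≤ edist (F n ω p) (G ω p)})
      atTop (nhds 0) := by
    have := tendsto_finset_sum (Finset.univ : Finset (Fin N))
      (fun p _ => h p ε hε)
    simpa using this
  exact tendsto_of_tendsto_of_tendsto_of_le_of_le tendsto_const_nhds hsumto
    (fun n => zero_le) hbound

/-- The feasible OWB estimator (built from variance estimates that are
consistent up to a common positive scale) converges in probability to the ideal OWB
estimator: their difference tends to 0 in probability. -/
theorem owb_feasible_estimator_consistent
    {Ω : Type*} [MeasureSpace Ω] [IsProbabilityMeasure (ℙ : Measure Ω)]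
    (N : ℕ) (hN : 1 ≤ N)
    (v : Fin N → ℝ) (hv : ∀ p, 0 < v p)
    (c : ℝ) (hc : 0 < c)
    (X : Fin N → Ω → ℝ) (hXmeas : ∀ p, Measurable (X p))
    (Vhat : ℕ → Fin N → Ω → ℝ)
    (hVmeas : ∀ n p, Measurable (Vhat n p))
    (hVpos : ∀ n p ω, 0 < Vhat n p ω)
    (hVconv : ∀ p, TendstoInMeasure ℙ (fun n => Vhat n p) atTop (fun _ => c * v p)) :
    TendstoInMeasure (ℙ : Measure Ω)
      (fun (n : ℕ) (ω : Ω) =>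
        (∑ p, ((Vhat n p ω)⁻¹ / ∑ q, (Vhat n q ω)⁻¹) * X p ω)
          - ∑ p, ((v p)⁻¹ / ∑ q, (v q)⁻¹) * X p ω)
      atTop (fun _ => (0 : ℝ)) := by
  haveI : Nonempty (Fin N) := ⟨⟨0, hN⟩⟩
  set D : ℕ → Ω → ℝ := fun n ω =>
    (∑ p, ((Vhat n p ω)⁻¹ / ∑ q, (Vhat n q ω)⁻¹) * X p ω)
      - ∑ p, ((v p)⁻¹ / ∑ q, (v q)⁻¹) * X p ω with hD
  -- measurability of D n
  have hDmeas : ∀ n, Measurable (D n) := by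
    intro n
    apply Measurable.sub
    · exact Finset.measurable_sum _ fun p _ =>
        (((hVmeas n p).inv).div (Finset.measurable_sum _ fun q _ => (hVmeas n q).inv)).mul
          (hXmeas p)
    · exact Finset.measurable_sum _ fun p _ => (measurable_const.mul (hXmeas p))
  -- vector convergence in measure
  have hvec : TendstoInMeasure (ℙ : Measure Ω)
      (fun n ω (p : Fin N) => Vhat n p ω) atTop (fun _ p => c * v p) :=
    tendstoInMeasure_pi_of_components _ _ fun p => hVconv p
  -- pointwise: if each Vhat converges, then D converges to 0
  have hptwise : ∀ (u : ℕ → ℕ) (ω : Ω),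
      (∀ p, Filter.Tendsto (fun i => Vhat (u i) p ω) atTop (nhds (c * v p))) →
      Filter.Tendsto (fun i => D (u i) ω) atTop (nhds 0) := by
    intro u ω h
    have hcv : ∀ p : Fin N, (c * v p) ≠ 0 := fun p => (mul_pos hc (hv p)).ne'
    have hinv : ∀ p, Filter.Tendsto (fun i => (Vhat (u i) p ω)⁻¹) atTop
        (nhds ((c * v p)⁻¹)) := fun p => (h p).inv₀ (hcv p)
    have hsum : Filter.Tendsto (fun i => ∑ q, (Vhat (u i) q ω)⁻¹) atTop
        (nhds (∑ q, (c * v q)⁻¹)) :=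
      tendsto_finset_sum _ fun q _ => hinv q
    have hden : (∑ q, (c * v q)⁻¹) ≠ 0 := by
      have : (0:ℝ) < ∑ q, (c * v q)⁻¹ :=
        Finset.sum_pos (fun q _ => inv_pos.2 (mul_pos hc (hv q))) Finset.univ_nonempty
      exact this.ne'
    have hL : Filter.Tendsto (fun i => ∑ p, ((Vhat (u i) p ω)⁻¹ / ∑ q, (Vhat (u i) q ω)⁻¹) * X p ω)
        atTop (nhds (∑ p, ((c * v p)⁻¹ / ∑ q, (c * v q)⁻¹) * X p ω)) :=
      tendsto_finset_sum _ fun p _ => (((hinv p).div hsum hden).mul tendsto_const_nhds)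
    have hLeq : (∑ p, ((c * v p)⁻¹ / ∑ q, (c * v q)⁻¹) * X p ω)
        = ∑ p, ((v p)⁻¹ / ∑ q, (v q)⁻¹) * X p ω := by
      refine Finset.sum_congr rfl fun p _ => ?_
      congr 1
      have h1 : ∀ q : Fin N, (c * v q)⁻¹ = c⁻¹ * (v q)⁻¹ := fun q => by
        rw [mul_inv]
      simp only [h1, ← Finset.mul_sum]
      rw [mul_div_mul_left _ _ (inv_ne_zero hc.ne')]
    rw [hLeq] at hL
    have : Filter.Tendsto (fun i => D (u i) ω) atTop
        (nhds ((∑ p, ((v p)⁻¹ / ∑ q, (v q)⁻¹) * X p ω)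
          - ∑ p, ((v p)⁻¹ / ∑ q, (v q)⁻¹) * X p ω)) :=
      hL.sub tendsto_const_nhds
    simpa using this
  -- subsequence argument
  intro ε hε
  refine tendsto_of_subseq_tendsto fun ns hns => ?_
  have hvec' : TendstoInMeasure (ℙ : Measure Ω)
      (fun i ω (p : Fin N) => Vhat (ns i) p ω) atTop (fun _ p => c * v p) :=
    fun δ hδ => (hvec δ hδ).comp hns
  obtain ⟨ms, hms_mono, hms⟩ := hvec'.exists_seq_tendsto_ae
  have hae : ∀ᵐ ω ∂(ℙ : Measure Ω),
      Filter.Tendsto (fun i => D (ns (ms i)) ω) atTop (nhds 0) := by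
    filter_upwards [hms] with ω hω
    refine hptwise (fun i => ns (ms i)) ω fun p => ?_
    have := tendsto_pi_nhds.1 hω p
    simpa using this
  have hDconv : TendstoInMeasure (ℙ : Measure Ω) (fun i => D (ns (ms i))) atTop
      (fun _ => (0:ℝ)) :=
    tendstoInMeasure_of_tendsto_ae (fun i => (hDmeas (ns (ms i))).aestronglyMeasurable) hae
  exact ⟨ms, hDconv ε hε⟩
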